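/- Let Δ be a (d−1)-dimensional balanced simplicial complex with coloring map κ. For all integers i, k with 0 ≤ i ≤ k ≤ d, one has C(d−i, k−i) · h_i(Δ) = Σ_{T ⊆ [d], #T = k} h_i(Δ_T), where the sum is over all k-element subsets T of [d] and Δ_T is the rank-selected subcomplex. -/

import Mathlib

open Finset BigOperators

namespace BGLB

variable {V : Type*} [DecidableEq V]

/-- `Δ` is an (abstract) simplicial complex: it contains the empty face and is
closed under taking subsets. -/
def IsComplex (Δ : Finset (Finset V)) : Prop :=
  ∅ ∈ Δ ∧ ∀ F ∈ Δ, ∀ G ⊆ F, G ∈ Δ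

/-- `Δ` is pure of dimension `d - 1`: every face is contained in a face of cardinality `d`. -/
def IsPure (d : ℕ) (Δ : Finset (Finset V)) : Prop :=
  ∀ F ∈ Δ, ∃ G ∈ Δ, F ⊆ G ∧ G.card = d

/-- `Δ` has dimension at most `d - 1`. -/
def DimLE (d : ℕ) (Δ : Finset (Finset V)) : Prop := ∀ F ∈ Δ, F.card ≤ d

/-- `Δ` has dimension exactly `d - 1`. -/
def DimEq (d : ℕ) (Δ : Finset (Finset V)) : Prop := DimLE d Δ ∧ ∃ F ∈ Δ, F.card = d

/-- `fNum Δ j` is the number `f_{j-1}(Δ)` of faces of `Δ` of cardinality `j`. -/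
def fNum (Δ : Finset (Finset V)) (j : ℕ) : ℕ := (Δ.filter fun F => F.card = j).card

/-- The `h`-numbers of `Δ` with respect to the dimension parameter `d`:
`h_i = ∑_{j=0}^{i} (-1)^{i-j} C(d-j, i-j) f_{j-1}`. -/
def hNum (d : ℕ) (Δ : Finset (Finset V)) (i : ℕ) : ℤ :=
  ∑ j ∈ Finset.range (i + 1), (-1 : ℤ) ^ (i - j) * ((d - j).choose (i - j)) * fNum Δ j

/-- The balanced `g`-numbers `g̅_i = i h_i - (d - i + 1) h_{i-1}` (with `h_{-1} = 0`). -/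
def gbar (d : ℕ) (Δ : Finset (Finset V)) : ℕ → ℤ
  | 0 => 0
  | i + 1 => (i + 1 : ℤ) * hNum d Δ (i + 1) - ((d : ℤ) - (i + 1) + 1) * hNum d Δ i

/-- `κ` is a proper `d`-coloring of (the graph of) `Δ`: the two endpoints of any
edge get different colors. -/
def IsBalanced (d : ℕ) (Δ : Finset (Finset V)) (κ : V → Fin d) : Prop :=
  ∀ F ∈ Δ, F.card = 2 → ∀ x ∈ F, ∀ y ∈ F, x ≠ y → κ x ≠ κ y

/-- The rank-selected subcomplex `Δ_T = {F ∈ Δ : κ(F) ⊆ T}`. -/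
def rankSel {d : ℕ} (Δ : Finset (Finset V)) (κ : V → Fin d) (T : Finset (Fin d)) :
    Finset (Finset V) :=
  Δ.filter fun F => ∀ v ∈ F, κ v ∈ T

/-- The link `lk_Δ(F) = {G ∈ Δ : F ∪ G ∈ Δ, F ∩ G = ∅}`. -/
def link (Δ : Finset (Finset V)) (F : Finset V) : Finset (Finset V) :=
  Δ.filter fun G => Disjoint F G ∧ F ∪ G ∈ Δ


theorem card_supersets {α : Type*} [DecidableEq α] [Fintype α]
    (S : Finset α) (k : ℕ) (hSk : S.card ≤ k) :
    ((Finset.powersetCard k (univ : Finset α)).filter (fun T => S ⊆ T)).card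
      = (Fintype.card α - S.card).choose (k - S.card) := by
  have hcard : (univ \ S).card = Fintype.card α - S.card := by
    simp [card_sdiff_of_subset (subset_univ S)]
  rw [← hcard, ← Finset.card_powersetCard (k - S.card) (univ \ S)]
  apply Finset.card_bij (fun T _ => T \ S)
  · intro T hT
    simp only [mem_filter, Finset.mem_powersetCard] at hT ⊢
    exact ⟨sdiff_subset_sdiff hT.1.1 le_rfl, by rw [card_sdiff_of_subset hT.2, hT.1.2]⟩
  · intro T hT T' hT' h
    simp only [mem_filter, Finset.mem_powersetCard] at hT hT'
    rw [← sdiff_union_of_subset hT.2, ← sdiff_union_of_subset hT'.2, h]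
  · intro U hU
    simp only [Finset.mem_powersetCard] at hU
    have hd : Disjoint U S := by
      intro x hx hxS a ha
      have := hU.1 (hx ha); simp at this; exact absurd (hxS ha) this
    refine ⟨U ∪ S, ?_, ?_⟩
    · simp only [mem_filter, Finset.mem_powersetCard]
      refine ⟨⟨subset_univ _, ?_⟩, subset_union_right⟩
      rw [card_union_of_disjoint hd, hU.2]
      omega
    · rw [union_sdiff_right, sdiff_eq_self_of_disjoint hd]

theorem image_card_of_mem {n d : ℕ} {Δ : Finset (Finset (Fin n))}
    (hΔ : IsComplex Δ) {κ : Fin n → Fin d} (hκ : IsBalanced d Δ κ)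
    {F : Finset (Fin n)} (hF : F ∈ Δ) : (F.image κ).card = F.card := by
  apply Finset.card_image_of_injOn
  intro x hx y hy hxy
  by_contra hne
  have hpair : ({x, y} : Finset (Fin n)) ∈ Δ :=
    hΔ.2 F hF _ (Finset.insert_subset hx (Finset.singleton_subset_iff.2 hy))
  exact hκ _ hpair (Finset.card_pair hne) x (by simp) y (by simp) hne hxy

theorem sum_fNum_rankSel {n d : ℕ} {Δ : Finset (Finset (Fin n))}
    (hΔ : IsComplex Δ) {κ : Fin n → Fin d} (hκ : IsBalanced d Δ κ)
    (j k : ℕ) (hjk : j ≤ k) :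
    ∑ T ∈ Finset.powersetCard k (Finset.univ : Finset (Fin d)),
        fNum (rankSel Δ κ T) j = (d - j).choose (k - j) * fNum Δ j := by
  have key : ∀ T, fNum (rankSel Δ κ T) j
      = ∑ F ∈ Δ.filter (fun F => F.card = j), if F.image κ ⊆ T then 1 else 0 := by
    intro T
    rw [← Finset.card_filter]
    unfold fNum rankSel
    rw [Finset.filter_filter, Finset.filter_filter]
    congr 1
    ext F
    simp only [Finset.mem_filter, Finset.image_subset_iff]
    tauto
  simp only [key]
  rw [Finset.sum_comm]
  have hsum : ∀ F ∈ Δ.filter (fun F => F.card = j),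
      (∑ T ∈ Finset.powersetCard k (Finset.univ : Finset (Fin d)),
        if F.image κ ⊆ T then 1 else 0) = (d - j).choose (k - j) := by
    intro F hF
    rw [Finset.mem_filter] at hF
    have himg : (F.image κ).card = j := by
      rw [image_card_of_mem hΔ hκ hF.1, hF.2]
    rw [← Finset.card_filter]
    rw [card_supersets _ _ (by rw [himg]; exact hjk), himg, Fintype.card_fin]
  rw [Finset.sum_congr rfl hsum, Finset.sum_const, smul_eq_mul, mul_comm]
  rfl

/-- Lemma 3.3.
For a `(d-1)`-dimensional balanced simplicial complex `Δ` and `i ≤ k ≤ d`,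
`C(d-i, k-i) · h_i(Δ) = ∑_{T ⊆ [d], #T = k} h_i(Δ_T)`, where the `h`-numbers of
`Δ_T` are taken with dimension parameter `k = #T`. -/
theorem rank_selection_h_sum (n d : ℕ) (Δ : Finset (Finset (Fin n)))
    (hΔ : IsComplex Δ) (hdim : DimEq d Δ)
    (κ : Fin n → Fin d) (hκ : IsBalanced d Δ κ)
    (i k : ℕ) (hik : i ≤ k) (hkd : k ≤ d) :
    ((d - i).choose (k - i) : ℤ) * hNum d Δ i =
      ∑ T ∈ Finset.powersetCard k (Finset.univ : Finset (Fin d)), hNum k (rankSel Δ κ T) i := by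
  unfold hNum
  rw [Finset.mul_sum, Finset.sum_comm]
  apply Finset.sum_congr rfl
  intro j hj
  rw [Finset.mem_range] at hj
  have hji : j ≤ i := Nat.lt_succ_iff.mp hj
  have hnat := sum_fNum_rankSel hΔ hκ j k (hji.trans hik)
  have hZ : ∑ T ∈ Finset.powersetCard k (Finset.univ : Finset (Fin d)),
      (fNum (rankSel Δ κ T) j : ℤ) = ((d - j).choose (k - j) : ℤ) * fNum Δ j := by
    rw [← Nat.cast_sum]
    exact_mod_cast congrArg (Nat.cast : ℕ → ℤ) hnat
  have hrw : ∀ T ∈ Finset.powersetCard k (Finset.univ : Finset (Fin d)),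
      (-1 : ℤ) ^ (i - j) * ((k - j).choose (i - j)) * fNum (rankSel Δ κ T) j
      = ((-1 : ℤ) ^ (i - j) * ((k - j).choose (i - j))) * (fNum (rankSel Δ κ T) j : ℤ) := by
    intro T _; ring
  rw [Finset.sum_congr rfl hrw, ← Finset.mul_sum, hZ]
  have hchoose : (d - j).choose (k - j) * (k - j).choose (i - j)
      = (d - j).choose (i - j) * (d - i).choose (k - i) := by
    have := Nat.choose_mul (n := d - j) (k := k - j) (s := i - j)
      (by omega)
    have e1 : d - j - (i - j) = d - i := by omega
    have e2 : k - j - (i - j) = k - i := by omega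
    rw [this, e1, e2]
  have : ((d - j).choose (k - j) : ℤ) * (k - j).choose (i - j)
      = (d - j).choose (i - j) * (d - i).choose (k - i) := by exact_mod_cast hchoose
  linear_combination (-(-1 : ℤ) ^ (i - j) * (fNum Δ j : ℤ)) * this


end BGLB
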